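/- Let I be a set with at least 3 elements, let d_M be a metric on I making M = (I, d_M) a metric space with s(M) > 0 and e(M) > 0, and let ε be a real number with 0 < ε ≤ s(M)/8 and ε < e(M)/8. Let a and b be metrics on I with sup_{i,j ∈ I} |a(i,j) − d_M(i,j)| < 2ε and sup_{i,j ∈ I} |b(i,j) − d_M(i,j)| < 2ε. Then inf{dis R : R a correspondence between (I,a) and (I,b)} = sup_{i,j ∈ I} |a(i,j) − b(i,j)|; that is, 2·d_GH((I,a),(I,b)) equals the sup-distance between the distance matrices a and b, so the canonical projection from the metric cone to the Gromov–Hausdorff class is isometric on the ε-ball (in the half-sup metric) around d_M. -/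

import Mathlib

open ENNReal

/-- A metric on a set `I`: symmetric, vanishing exactly on the diagonal, triangle inequality. -/
def IsMetric {I : Type*} (d : I → I → ℝ) : Prop :=
  (∀ x y, d x y = d y x) ∧ (∀ x y, d x y = 0 ↔ x = y) ∧ ∀ x y z, d x z ≤ d x y + d y z

/-- A correspondence between `A` and `B`: a relation whose projections are surjective. -/
def IsCorr {A B : Type*} (R : Set (A × B)) : Prop :=
  (∀ a, ∃ b, (a, b) ∈ R) ∧ ∀ b, ∃ a, (a, b) ∈ R

/-- Distortion of a relation with respect to distance functions `dA` and `dB`. -/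
noncomputable def disRel {A B : Type*} (dA : A → A → ℝ) (dB : B → B → ℝ)
    (σ : Set (A × B)) : ℝ≥0∞ :=
  ⨆ p ∈ σ, ⨆ q ∈ σ, ENNReal.ofReal |dA p.1 q.1 - dB p.2 q.2|

/-- `s(d) = inf{d(i,j) : i ≠ j}`. -/
noncomputable def sVal {I : Type*} (d : I → I → ℝ) : ℝ :=
  sInf {r : ℝ | ∃ i j : I, i ≠ j ∧ r = d i j}

/-- `e(d) = inf{dis f : f : I ≃ I, f ≠ id}`, a value in `[0,∞]`. -/
noncomputable def eVal {I : Type*} (d : I → I → ℝ) : ℝ≥0∞ :=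
  ⨅ f ∈ {f : I ≃ I | f ≠ Equiv.refl I},
    ⨆ i : I, ⨆ j : I, ENNReal.ofReal |d (f i) (f j) - d i j|

lemma metric_nonneg {I : Type*} {d : I → I → ℝ} (h : IsMetric d) (i j : I) : 0 ≤ d i j := by
  obtain ⟨hsym, hzero, htri⟩ := h
  have h1 : d i i = 0 := (hzero i i).2 rfl
  have h2 := htri i j i
  rw [h1, hsym j i] at h2
  linarith

lemma le_disRel {A B : Type*} (dA : A → A → ℝ) (dB : B → B → ℝ) (σ : Set (A × B))
    {p q : A × B} (hp : p ∈ σ) (hq : q ∈ σ) :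
    ENNReal.ofReal |dA p.1 q.1 - dB p.2 q.2| ≤ disRel dA dB σ :=
  le_trans (le_iSup₂ (f := fun (q : A × B) (_ : q ∈ σ) =>
      ENNReal.ofReal |dA p.1 q.1 - dB p.2 q.2|) q hq)
    (le_iSup₂ (f := fun (p : A × B) (_ : p ∈ σ) =>
      ⨆ q ∈ σ, ENNReal.ofReal |dA p.1 q.1 - dB p.2 q.2|) p hp)

theorem stmt_8 {I : Type*} (hI : ∃ i j k : I, i ≠ j ∧ i ≠ k ∧ j ≠ k)
    (dM : I → I → ℝ) (hM : IsMetric dM) (hs : 0 < sVal dM) (he : 0 < eVal dM)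
    (ε : ℝ) (hε0 : 0 < ε) (hε1 : ε ≤ sVal dM / 8) (hε2 : ENNReal.ofReal ε < eVal dM / 8)
    (a b : I → I → ℝ) (ha : IsMetric a) (hb : IsMetric b)
    (hadM : (⨆ i, ⨆ j, ENNReal.ofReal |a i j - dM i j|) < ENNReal.ofReal (2 * ε))
    (hbdM : (⨆ i, ⨆ j, ENNReal.ofReal |b i j - dM i j|) < ENNReal.ofReal (2 * ε)) :
    (⨅ R ∈ {R : Set (I × I) | IsCorr R}, disRel a b R) =
      ⨆ i, ⨆ j, ENNReal.ofReal |a i j - b i j| := by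
  set S : ℝ≥0∞ := ⨆ i, ⨆ j, ENNReal.ofReal |a i j - b i j| with hS
  -- pointwise bounds
  have haM : ∀ i j, |a i j - dM i j| < 2 * ε := by
    intro i j
    have h1 : ENNReal.ofReal |a i j - dM i j| < ENNReal.ofReal (2 * ε) :=
      lt_of_le_of_lt (le_trans (le_iSup (fun j => ENNReal.ofReal |a i j - dM i j|) j)
        (le_iSup (fun i => ⨆ j, ENNReal.ofReal |a i j - dM i j|) i)) hadM
    exact (ENNReal.ofReal_lt_ofReal_iff (by linarith)).1 h1
  have hbM : ∀ i j, |b i j - dM i j| < 2 * ε := by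
    intro i j
    have h1 : ENNReal.ofReal |b i j - dM i j| < ENNReal.ofReal (2 * ε) :=
      lt_of_le_of_lt (le_trans (le_iSup (fun j => ENNReal.ofReal |b i j - dM i j|) j)
        (le_iSup (fun i => ⨆ j, ENNReal.ofReal |b i j - dM i j|) i)) hbdM
    exact (ENNReal.ofReal_lt_ofReal_iff (by linarith)).1 h1
  -- separation: dM i j ≥ 8ε for i ≠ j
  have hdMlb : ∀ i j : I, i ≠ j → 8 * ε ≤ dM i j := by
    intro i j hij
    have hbdd : BddBelow {r : ℝ | ∃ i j : I, i ≠ j ∧ r = dM i j} := by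
      refine ⟨0, ?_⟩
      rintro r ⟨i, j, -, rfl⟩
      exact metric_nonneg hM i j
    have h1 : sVal dM ≤ dM i j := csInf_le hbdd ⟨i, j, hij, rfl⟩
    have : sVal dM / 8 ≤ dM i j / 8 := by linarith
    linarith
  -- S ≤ ofReal (4ε)
  have habR : ∀ i j, |a i j - b i j| < 4 * ε := by
    intro i j
    have h1 := haM i j
    have h2 := hbM i j
    have := abs_sub_abs_le_abs_sub (a i j - dM i j) (b i j - dM i j)
    calc |a i j - b i j| = |(a i j - dM i j) - (b i j - dM i j)| := by ring_nf
      _ ≤ |a i j - dM i j| + |b i j - dM i j| := abs_sub _ _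
      _ < 4 * ε := by linarith
  have hS4 : S ≤ ENNReal.ofReal (4 * ε) :=
    iSup_le fun i => iSup_le fun j => ENNReal.ofReal_le_ofReal (habR i j).le
  -- upper bound: the diagonal correspondence
  have hub : (⨅ R ∈ {R : Set (I × I) | IsCorr R}, disRel a b R) ≤ S := by
    have hdiag : {p : I × I | p.1 = p.2} ∈ {R : Set (I × I) | IsCorr R} :=
      ⟨fun i => ⟨i, rfl⟩, fun j => ⟨j, rfl⟩⟩
    refine le_trans (iInf₂_le _ hdiag) ?_
    refine iSup₂_le fun p hp => iSup₂_le fun q hq => ?_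
    have hp' : p.1 = p.2 := hp
    have hq' : q.1 = q.2 := hq
    rw [← hp', ← hq']
    exact le_trans (le_iSup (fun j => ENNReal.ofReal |a p.1 j - b p.1 j|) q.1)
      (le_iSup (fun i => ⨆ j, ENNReal.ofReal |a i j - b i j|) p.1)
  -- lower bound
  have hlb : S ≤ ⨅ R ∈ {R : Set (I × I) | IsCorr R}, disRel a b R := by
    refine le_iInf₂ fun R hR => ?_
    by_contra hcon
    push_neg at hcon
    have hdis4 : disRel a b R < ENNReal.ofReal (4 * ε) := lt_of_lt_of_le hcon hS4
    -- pairwise bound from distortion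
    have key : ∀ i j i' j' : I, (i, j) ∈ R → (i', j') ∈ R → |a i i' - b j j'| < 4 * ε := by
      intro i j i' j' h1 h2
      have := lt_of_le_of_lt (le_disRel a b R h1 h2) hdis4
      exact (ENNReal.ofReal_lt_ofReal_iff (by linarith)).1 this
    -- R is functional
    have hfun : ∀ i j j' : I, (i, j) ∈ R → (i, j') ∈ R → j = j' := by
      intro i j j' h1 h2
      by_contra hne
      have h3 := key i j i j' h1 h2
      rw [(ha.2.1 i i).2 rfl] at h3
      have h4 : 8 * ε ≤ dM j j' := hdMlb j j' hne
      have h5 := hbM j j'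
      have h6 : 0 ≤ b j j' := metric_nonneg hb j j'
      rw [zero_sub, abs_neg, abs_of_nonneg h6] at h3
      rw [abs_lt] at h5
      linarith
    have hinj : ∀ i i' j : I, (i, j) ∈ R → (i', j) ∈ R → i = i' := by
      intro i i' j h1 h2
      by_contra hne
      have h3 := key i j i' j h1 h2
      rw [(hb.2.1 j j).2 rfl] at h3
      have h4 : 8 * ε ≤ dM i i' := hdMlb i i' hne
      have h5 := haM i i'
      have h6 : 0 ≤ a i i' := metric_nonneg ha i i'
      rw [sub_zero, abs_of_nonneg h6] at h3
      rw [abs_lt] at h5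
      linarith
    -- the induced bijection
    choose f hf using hR.1
    choose g hg using hR.2
    have hgf : ∀ i, g (f i) = i := fun i => hinj _ _ _ (hg (f i)) (hf i)
    have hfg : ∀ j, f (g j) = j := fun j => hfun _ _ _ (hf (g j)) (hg j)
    set F : I ≃ I := ⟨f, g, hgf, hfg⟩ with hF
    -- F must be the identity
    have hFid : ∀ i, f i = i := by
      by_contra hne
      push_neg at hne
      have hFne : F ∈ {f : I ≃ I | f ≠ Equiv.refl I} := by
        obtain ⟨i0, hi0⟩ := hne
        intro hcontra
        exact hi0 (by rw [show f i0 = F i0 from rfl, hcontra]; rfl)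
      have hle : eVal dM ≤ ⨆ i : I, ⨆ j : I, ENNReal.ofReal |dM (F i) (F j) - dM i j| :=
        iInf₂_le F hFne
      have hbound : (⨆ i : I, ⨆ j : I, ENNReal.ofReal |dM (F i) (F j) - dM i j|)
          ≤ ENNReal.ofReal (8 * ε) := by
        refine iSup_le fun i => iSup_le fun j => ENNReal.ofReal_le_ofReal ?_
        have h1 := hbM (f i) (f j)
        have h2 := key i (f i) j (f j) (hf i) (hf j)
        have h3 := haM i j
        have hFi : F i = f i := rfl
        have hFj : F j = f j := rfl
        rw [hFi, hFj]
        rw [abs_lt] at h1 h2 h3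
        rw [abs_le]
        constructor <;> [nlinarith; nlinarith]
      have h8 : ENNReal.ofReal (8 * ε) < eVal dM := by
        have h1 : ENNReal.ofReal (8 * ε) = 8 * ENNReal.ofReal ε := by
          rw [ENNReal.ofReal_mul (by norm_num : (0:ℝ) ≤ 8)]
          norm_num
        rw [h1]
        calc 8 * ENNReal.ofReal ε < 8 * (eVal dM / 8) :=
              (ENNReal.mul_lt_mul_iff_right (by norm_num) (by norm_num)).2 hε2
          _ ≤ eVal dM := ENNReal.mul_div_le
      exact absurd (lt_of_le_of_lt (hle.trans hbound) h8) (lt_irrefl _)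
    -- hence R is the diagonal, so S ≤ disRel
    have : S ≤ disRel a b R := by
      refine iSup_le fun i => iSup_le fun j => ?_
      have h1 : (i, i) ∈ R := by have := hf i; rwa [hFid i] at this
      have h2 : (j, j) ∈ R := by have := hf j; rwa [hFid j] at this
      exact le_disRel a b R h1 h2
    exact absurd (lt_of_le_of_lt this hcon) (lt_irrefl _)
  exact le_antisymm hub hlb
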